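/- Let D ∈ {−1,0,1}^{(n−1)×n} be the incidence matrix of the star graph S_n on n ≥ 2 vertices, whose center is vertex 1 (so the row of edge i has entry +1 in column 1 and −1 in column i+1). Then the matrix S ∈ ℝ^{n×(n−1)} with entries S_{i,j} = −(n−1)/n if i = j+1 and S_{i,j} = 1/n otherwise is the Moore–Penrose pseudoinverse of D; consequently, each column s_j of D† has ‖s_j‖₂² = (n² − n)/n² ≤ 1, so ρ(D) ≤ 1. Moreover, κ_T(D) ≥ 1/(2√|T|) for every nonempty T ⊆ [n−1]. -/

import Mathlib

open MeasureTheory ProbabilityTheory Matrix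

noncomputable section

/-- Euclidean norm of a finitely indexed real vector. -/
def norm2 {V : Type*} [Fintype V] (θ : V → ℝ) : ℝ := Real.sqrt (∑ i, θ i ^ 2)

/-- Euclidean norm of the `j`-th column of `S`. -/
def colNorm {V E : Type*} [Fintype V] (S : Matrix V E ℝ) (j : E) : ℝ :=
  Real.sqrt (∑ i, S i j ^ 2)

/-- `D` is an (oriented) edge–vertex incidence matrix of the simple graph `G`:
each row has a `1` and a `-1` at the endpoints of an edge of `G` and `0` elsewhere,
and each edge of `G` corresponds to exactly one row. -/
def IsIncidence {V E : Type*} (G : SimpleGraph V) (D : Matrix E V ℝ) : Prop :=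
  (∀ e : E, ∃ i j : V, G.Adj i j ∧ D e i = 1 ∧ D e j = -1 ∧
      ∀ k : V, k ≠ i → k ≠ j → D e k = 0) ∧
  (∀ i j : V, G.Adj i j →
      ∃! e : E, (D e i = 1 ∧ D e j = -1) ∨ (D e i = -1 ∧ D e j = 1))

/-- `S` is the Moore–Penrose pseudoinverse of `D`. -/
def IsMoorePenrose {E V : Type*} [Fintype V] [Fintype E]
    (D : Matrix E V ℝ) (S : Matrix V E ℝ) : Prop :=
  D * S * D = D ∧ S * D * S = S ∧ (D * S)ᵀ = D * S ∧ (S * D)ᵀ = S * D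

/-- Inverse scaling factor: maximal column norm of the pseudoinverse `S` of `D`. -/
def invScaling {V E : Type*} [Fintype V] (S : Matrix V E ℝ) : ℝ := ⨆ j : E, colNorm S j

/-- Compatibility factor `κ_T(D)`. -/
def compat {V E : Type*} [Fintype V] [Fintype E] [DecidableEq E]
    (D : Matrix E V ℝ) (T : Finset E) : ℝ :=
  if T = ∅ then 1
  else sInf {r : ℝ | ∃ θ : V → ℝ, (∑ e ∈ T, |D.mulVec θ e|) ≠ 0 ∧
    r = Real.sqrt T.card * norm2 θ / ∑ e ∈ T, |D.mulVec θ e|}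

/-- `θhat` is a TV denoiser with data `y` and regularization `lam`,
i.e. a minimizer of the TV-penalized least squares criterion. -/
def IsTVDenoiser {V E : Type*} [Fintype V] [Fintype E]
    (D : Matrix E V ℝ) (lam : ℝ) (y θhat : V → ℝ) : Prop :=
  ∀ θ : V → ℝ,
    (1 / (Fintype.card V : ℝ)) * ∑ i, (θhat i - y i) ^ 2 + lam * ∑ e, |D.mulVec θhat e|
      ≤ (1 / (Fintype.card V : ℝ)) * ∑ i, (θ i - y i) ^ 2 + lam * ∑ e, |D.mulVec θ e|

/-- The law of the noise vector `ε`: independent centered Gaussian coordinates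
with variance `σ²`. -/
def noise (V : Type*) [Fintype V] (σ : ℝ) : Measure (V → ℝ) :=
  Measure.pi fun _ => gaussianReal 0 (σ ^ 2).toNNReal

/-- Number of nonzero coordinates. -/
def supp0 {E : Type*} [Fintype E] (x : E → ℝ) : ℕ :=
  (Finset.univ.filter fun e => x e ≠ 0).card

/-- The N×N two-dimensional grid graph. -/
def gridGraph2 (N : ℕ) : SimpleGraph (Fin N × Fin N) :=
  SimpleGraph.fromRel fun a b =>
    (a.1 = b.1 ∧ (a.2 : ℕ) + 1 = (b.2 : ℕ)) ∨ (a.2 = b.2 ∧ (a.1 : ℕ) + 1 = (b.1 : ℕ))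

/-- The d-dimensional N×⋯×N grid graph. -/
def gridGraphD (d N : ℕ) : SimpleGraph (Fin d → Fin N) :=
  SimpleGraph.fromRel fun a b =>
    ∃ j : Fin d, ((a j : ℕ) + 1 = (b j : ℕ)) ∧ ∀ k : Fin d, k ≠ j → a k = b k

/-- The d-dimensional hypercube graph. -/
def cubeGraph (d : ℕ) : SimpleGraph (Fin d → Bool) :=
  SimpleGraph.fromRel fun a b =>
    ∃ j : Fin d, a j ≠ b j ∧ ∀ k : Fin d, k ≠ j → a k = b k

/-- The k-th power of the cycle graph on n vertices. -/
def cyclePowerGraph (n k : ℕ) : SimpleGraph (Fin n) :=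
  SimpleGraph.fromRel fun a b =>
    ∃ l : ℕ, 1 ≤ l ∧ l ≤ k ∧ (b : ℕ) = ((a : ℕ) + l) % n

/-- The incidence matrix of the star graph on `n` vertices (center = vertex 1):
the row of edge `i` has `+1` in column 1 and `−1` in column `i+1`. -/
def starD (n : ℕ) : Matrix (Fin (n - 1)) (Fin n) ℝ :=
  fun e k => if (k : ℕ) = 0 then 1 else if (k : ℕ) = (e : ℕ) + 1 then -1 else 0

/-- The claimed pseudoinverse of `starD n`:
`S_{i,j} = −(n−1)/n` if `i = j+1` and `1/n` otherwise. -/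
def starS (n : ℕ) : Matrix (Fin n) (Fin (n - 1)) ℝ :=
  fun i j => if (i : ℕ) = (j : ℕ) + 1 then -(((n : ℝ) - 1) / n) else 1 / n

lemma sum_ite_succ_eq (m t : ℕ) :
    ∑ e : Fin m, (if t = (e : ℕ) + 1 then (1:ℝ) else 0) = if 1 ≤ t ∧ t ≤ m then 1 else 0 := by
  split_ifs with h
  · rw [Finset.sum_eq_single (⟨t - 1, by omega⟩ : Fin m)]
    · rw [if_pos (by simp; omega)]
    · intro b _ hb
      rw [if_neg]
      intro hc
      apply hb
      apply Fin.ext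
      show (b:ℕ) = t - 1
      omega
    · simp
  · refine Finset.sum_eq_zero fun e _ => ?_
    rw [if_neg]
    have := e.isLt
    omega

lemma sum_ite_val_eq (m t : ℕ) :
    ∑ i : Fin m, (if (i : ℕ) = t then (1:ℝ) else 0) = if t < m then 1 else 0 := by
  split_ifs with h
  · rw [Finset.sum_eq_single (⟨t, h⟩ : Fin m)]
    · simp
    · intro b _ hb
      rw [if_neg]
      intro hc
      exact hb (Fin.ext hc)
    · simp
  · refine Finset.sum_eq_zero fun i _ => ?_
    rw [if_neg]
    have := i.isLt
    omega

lemma starS_apply (n : ℕ) (hn : 2 ≤ n) (i : Fin n) (j : Fin (n-1)) :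
    starS n i j = 1 / n - (if (i:ℕ) = (j:ℕ) + 1 then 1 else 0) := by
  have h : (n:ℝ) ≠ 0 := Nat.cast_ne_zero.mpr (by omega)
  unfold starS
  split_ifs
  · field_simp
    ring
  · ring

lemma starD_apply' (n : ℕ) (e : Fin (n-1)) (k : Fin n) :
    starD n e k = (if (k:ℕ) = 0 then 1 else 0) - (if (k:ℕ) = (e:ℕ) + 1 then 1 else 0) := by
  unfold starD
  split_ifs <;> first | (exfalso; omega) | norm_num

lemma sum_starD_mul (n : ℕ) (hn : 2 ≤ n) (e : Fin (n-1)) (g : Fin n → ℝ) :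
    ∑ k, starD n e k * g k
      = g ⟨0, by omega⟩ - g ⟨(e:ℕ) + 1, by have := e.isLt; omega⟩ := by
  have key : ∀ k : Fin n, starD n e k * g k =
      (if k = (⟨0, by omega⟩ : Fin n) then g k else 0)
      - (if k = (⟨(e:ℕ) + 1, by have := e.isLt; omega⟩ : Fin n) then g k else 0) := by
    intro k
    have hv0 : (k = (⟨0, by omega⟩ : Fin n)) = ((k:ℕ) = 0) :=
      propext ⟨fun h => by rw [h], fun h => Fin.ext h⟩
    have hv1 : (k = (⟨(e:ℕ) + 1, by have := e.isLt; omega⟩ : Fin n)) = ((k:ℕ) = (e:ℕ) + 1) :=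
      propext ⟨fun h => by rw [h], fun h => Fin.ext h⟩
    rw [starD_apply']
    simp only [hv0, hv1]
    split_ifs <;> first | ring | (exfalso; omega)
  rw [Finset.sum_congr rfl fun k _ => key k, Finset.sum_sub_distrib,
      Finset.sum_ite_eq', Finset.sum_ite_eq']
  simp

lemma starD_mulVec (n : ℕ) (hn : 2 ≤ n) (θ : Fin n → ℝ) (e : Fin (n-1)) :
    (starD n).mulVec θ e
      = θ ⟨0, by omega⟩ - θ ⟨(e:ℕ) + 1, by have := e.isLt; omega⟩ := by
  rw [Matrix.mulVec, dotProduct, sum_starD_mul n hn]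

lemma starDS (n : ℕ) (hn : 2 ≤ n) : starD n * starS n = 1 := by
  have hc : (n:ℝ) ≠ 0 := Nat.cast_ne_zero.mpr (by omega)
  ext e f
  rw [Matrix.mul_apply, Matrix.one_apply, sum_starD_mul n hn,
      starS_apply n hn, starS_apply n hn]
  by_cases hef : e = f
  · subst hef
    rw [if_pos rfl, if_neg (by simp), if_pos (by simp)]
    field_simp
    ring
  · rw [if_neg hef, if_neg (by simp), if_neg (by simp [Fin.ext_iff] at hef ⊢; omega)]
    ring

lemma starSD_apply (n : ℕ) (hn : 2 ≤ n) (i k : Fin n) :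
    (starS n * starD n) i k = (if i = k then 1 else 0) - 1 / n := by
  have hc : (n:ℝ) ≠ 0 := Nat.cast_ne_zero.mpr (by omega)
  have hcast : ((n - 1 : ℕ) : ℝ) = (n:ℝ) - 1 := by
    rw [Nat.cast_sub (by omega)]; simp
  rw [Matrix.mul_apply]
  by_cases hk : (k:ℕ) = 0
  · have key : ∀ e : Fin (n-1), starS n i e * starD n e k =
        1/n - (if (i:ℕ) = (e:ℕ) + 1 then 1 else 0) := by
      intro e
      rw [starS_apply n hn, starD_apply', if_pos hk,
          if_neg (show ¬(k:ℕ) = (e:ℕ) + 1 by omega)]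
      ring
    rw [Finset.sum_congr rfl fun e _ => key e, Finset.sum_sub_distrib,
        Finset.sum_const, sum_ite_succ_eq, Finset.card_univ, Fintype.card_fin,
        nsmul_eq_mul, hcast]
    have hi' : (i:ℕ) ≤ n - 1 := by have := i.isLt; omega
    by_cases hi : (i:ℕ) = 0
    · rw [if_neg (show ¬(1 ≤ (i:ℕ) ∧ (i:ℕ) ≤ n - 1) by omega),
          if_pos (show i = k from Fin.ext (by omega))]
      field_simp
      ring
    · rw [if_pos (show 1 ≤ (i:ℕ) ∧ (i:ℕ) ≤ n - 1 by omega),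
          if_neg (show ¬ i = k from fun h => hi (by rw [h]; exact hk))]
      field_simp
      ring
  · have key : ∀ e : Fin (n-1), starS n i e * starD n e k =
        ((if (i:ℕ) = (k:ℕ) then 1 else 0) - 1/n) * (if (k:ℕ) = (e:ℕ) + 1 then 1 else 0) := by
      intro e
      rw [starS_apply n hn, starD_apply', if_neg hk]
      by_cases hke : (k:ℕ) = (e:ℕ) + 1
      · rw [if_pos hke]
        by_cases hik : (i:ℕ) = (k:ℕ)
        · rw [if_pos (show (i:ℕ) = (e:ℕ) + 1 by omega), if_pos hik]; ring
        · rw [if_neg (show ¬(i:ℕ) = (e:ℕ) + 1 by omega), if_neg hik]; ring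
      · rw [if_neg hke]; ring
    rw [Finset.sum_congr rfl fun e _ => key e, ← Finset.mul_sum, sum_ite_succ_eq,
        if_pos (show 1 ≤ (k:ℕ) ∧ (k:ℕ) ≤ n - 1 from
          ⟨by omega, by have := k.isLt; omega⟩), mul_one]
    by_cases h : i = k
    · rw [if_pos (show (i:ℕ) = (k:ℕ) by rw [h]), if_pos h]
    · rw [if_neg (show ¬(i:ℕ) = (k:ℕ) from fun hh => h (Fin.ext hh)), if_neg h]

/-- Proposition 4.3: `starS n` is the Moore–Penrose
pseudoinverse of the incidence matrix `starD n` of the star graph `S_n`; each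
of its columns has squared norm `(n² − n)/n² ≤ 1`, so `ρ(D) ≤ 1`; and
`κ_T(D) ≥ 1/(2√|T|)` for every nonempty `T`. -/
theorem star_graph_factors (n : ℕ) (hn : 2 ≤ n) :
    IsMoorePenrose (starD n) (starS n) ∧
    (∀ j : Fin (n - 1), colNorm (starS n) j ^ 2 = ((n : ℝ) ^ 2 - n) / (n : ℝ) ^ 2) ∧
    (∀ j : Fin (n - 1), colNorm (starS n) j ≤ 1) ∧
    (∀ T : Finset (Fin (n - 1)), T.Nonempty →
      1 / (2 * Real.sqrt T.card) ≤ compat (starD n) T) := by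
  have hc : (n:ℝ) ≠ 0 := Nat.cast_ne_zero.mpr (by omega)
  have hnpos : (0:ℝ) < n := by exact_mod_cast (by omega : 0 < n)
  have hDS := starDS n hn
  have hsq : ∀ j : Fin (n - 1),
      colNorm (starS n) j ^ 2 = ((n : ℝ) ^ 2 - n) / (n : ℝ) ^ 2 := by
    intro j
    rw [colNorm, Real.sq_sqrt (Finset.sum_nonneg fun i _ => sq_nonneg _)]
    have key : ∀ i : Fin n, starS n i j ^ 2 =
        1/(n:ℝ)^2 + (1 - 2/n) * (if (i:ℕ) = (j:ℕ) + 1 then 1 else 0) := by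
      intro i
      rw [starS_apply n hn]
      split_ifs <;> field_simp <;> ring
    rw [Finset.sum_congr rfl fun i _ => key i, Finset.sum_add_distrib,
        Finset.sum_const, ← Finset.mul_sum, sum_ite_val_eq,
        if_pos (by have := j.isLt; omega : (j:ℕ) + 1 < n),
        Finset.card_univ, Fintype.card_fin, nsmul_eq_mul, mul_one]
    field_simp
    ring
  refine ⟨⟨?_, ?_, ?_, ?_⟩, hsq, ?_, ?_⟩
  · rw [hDS, Matrix.one_mul]
  · rw [Matrix.mul_assoc, hDS, Matrix.mul_one]
  · rw [hDS, Matrix.transpose_one]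
  · ext a b
    rw [Matrix.transpose_apply, starSD_apply n hn, starSD_apply n hn]
    by_cases h : a = b
    · rw [h]
    · rw [if_neg h, if_neg (Ne.symm h)]
  · intro j
    have h0 : 0 ≤ colNorm (starS n) j := Real.sqrt_nonneg _
    have hle : ((n:ℝ)^2 - n)/(n:ℝ)^2 ≤ 1 := by
      rw [div_le_one (by positivity)]
      nlinarith
    nlinarith [hsq j]
  · intro T hT
    rw [compat, if_neg hT.ne_empty]
    have hcard : (1:ℝ) ≤ T.card := by exact_mod_cast hT.card_pos
    apply le_csInf
    · refine ⟨_, ⟨fun k : Fin n => if (k:ℕ) = 0 then 1 else 0, ?_, rfl⟩⟩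
      have : ∀ e ∈ T, |(starD n).mulVec (fun k : Fin n => if (k:ℕ) = 0 then 1 else 0) e| = 1 := by
        intro e _
        rw [starD_mulVec n hn]
        norm_num
      rw [Finset.sum_congr rfl this, Finset.sum_const, nsmul_eq_mul, mul_one]
      positivity
    · rintro r ⟨θ, hne, rfl⟩
      set s := ∑ e ∈ T, |(starD n).mulVec θ e| with hs
      have hs0 : 0 ≤ s := Finset.sum_nonneg fun e _ => abs_nonneg _
      have hspos : 0 < s := hs0.lt_of_ne (Ne.symm hne)
      have hN : ∀ k : Fin n, |θ k| ≤ norm2 θ := by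
        intro k
        rw [norm2, ← Real.sqrt_sq_eq_abs]
        exact Real.sqrt_le_sqrt (Finset.single_le_sum
          (f := fun i => θ i ^ 2) (fun i _ => sq_nonneg _) (Finset.mem_univ k))
      have hbound : s ≤ 2 * T.card * norm2 θ := by
        calc s ≤ ∑ _e ∈ T, 2 * norm2 θ := by
              refine Finset.sum_le_sum fun e _ => ?_
              rw [starD_mulVec n hn]
              calc |θ _ - θ _| ≤ |θ _| + |θ _| := abs_sub _ _
                _ ≤ norm2 θ + norm2 θ := add_le_add (hN _) (hN _)
                _ = 2 * norm2 θ := by ring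
          _ = 2 * T.card * norm2 θ := by
              rw [Finset.sum_const, nsmul_eq_mul]; ring
      have hNpos : 0 < norm2 θ := by nlinarith
      have hsqc : (0:ℝ) < Real.sqrt T.card := Real.sqrt_pos.mpr (by linarith)
      rw [div_le_div_iff₀ (by positivity) hspos]
      have hmm : Real.sqrt T.card * Real.sqrt T.card = T.card :=
        Real.mul_self_sqrt (by linarith)
      nlinarith [hbound]
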